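/- Let p be an odd prime, c ∈ ℤ_p, and h: ℤ_p → ℤ_p a compatible function, and define f: ℤ_p → ℤ_p by f(x) = c + x + p·(h(x+1) − h(x)). If c ≢ 0 (mod p), then f is ergodic with respect to μ_p. -/

import Mathlib

open MeasureTheory Function

variable {p : ℕ} [hp : Fact p.Prime]

noncomputable instance : MeasurableSpace ℤ_[p] := borel _
instance : BorelSpace ℤ_[p] := ⟨rfl⟩

/-- The Haar measure on `ℤ_[p]`, normalized so that `μp p ℤ_[p] = 1`. -/
noncomputable def μp (p : ℕ) [Fact p.Prime] : Measure ℤ_[p] :=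
  Measure.addHaarMeasure ⊤

/-- A function `f : ℤ_[p] → ℤ_[p]` is compatible if it is 1-Lipschitz w.r.t. `|·|_p`. -/
def Compatible (f : ℤ_[p] → ℤ_[p]) : Prop :=
  ∀ x y : ℤ_[p], ‖f x - f y‖ ≤ ‖x - y‖

/-- The `k`-th base-`p` digit of `x ∈ ℤ_[p]`, as a natural number in `{0,…,p-1}`. -/
noncomputable def digitN (x : ℤ_[p]) (k : ℕ) : ℕ := x.appr (k + 1) / p ^ k

/-- The `k`-th base-`p` digit of `x ∈ ℤ_[p]`, as an element of `ZMod p`. -/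
noncomputable def digit (x : ℤ_[p]) (k : ℕ) : ZMod p := (digitN x k : ZMod p)

/-- `f` has coordinate representation given by the family `φ`: the `k`-th digit of `f x`
is `φ k xb x_k`, where `xb = x mod p^k ∈ {0,…,p^k−1}` encodes the digits `(x_0,…,x_{k-1})`
and `x_k` is the `k`-th digit of `x`. -/
def CoordRep (f : ℤ_[p] → ℤ_[p]) (φ : ℕ → ℕ → ZMod p → ZMod p) : Prop :=
  ∀ (x : ℤ_[p]) (k : ℕ), digit (f x) k = φ k (x.appr k) (digit x k)

/-- The reduction of `f` modulo `p^k`, acting on natural-number residues `{0,…,p^k−1}`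
(for `k = k'+1` this is the map `f_{k'}` on `ℤ/p^k ℤ`). -/
noncomputable def red (f : ℤ_[p] → ℤ_[p]) (k : ℕ) (m : ℕ) : ℕ := (f (m : ℤ_[p])).appr k

/-- A map of `ZMod n` is transitive (a single-cycle permutation) iff every point can be
reached from every point by iteration. -/
def IsTransitive {n : ℕ} (g : ZMod n → ZMod n) : Prop :=
  ∀ a b : ZMod n, ∃ s : ℕ, g^[s] a = b

/-- A self-map of the residues `{0,…,N−1}` is transitive (single cycle). -/
def TransitiveOn (g : ℕ → ℕ) (N : ℕ) : Prop :=
  ∀ a, a < N → ∀ b, b < N → ∃ s : ℕ, g^[s] a = b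

/-- `compSeq ψ g xb n = ψ (g^[n-1] xb) ∘ ⋯ ∘ ψ (g xb) ∘ ψ xb`. -/
def compSeq (ψ : ℕ → ZMod p → ZMod p) (g : ℕ → ℕ) (xb : ℕ) : ℕ → ZMod p → ZMod p
  | 0 => id
  | n + 1 => ψ (g^[n] xb) ∘ compSeq ψ g xb n

/-- The permutation `F_{k,xb} = φ_{k,f_{k-1}^{(p^k-1)}(xb)} ∘ ⋯ ∘ φ_{k,xb}` of `ZMod p`. -/
noncomputable def Fperm (φ : ℕ → ℕ → ZMod p → ZMod p) (f : ℤ_[p] → ℤ_[p]) (k xb : ℕ) :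
    ZMod p → ZMod p :=
  compSeq (φ k) (red f k) xb (p ^ k)

namespace PadicErgAux

open PadicInt
open scoped ENNReal

lemma toZModPow_eq_iff {n : ℕ} {x y : ℤ_[p]} :
    toZModPow n x = toZModPow n y ↔ x - y ∈ Ideal.span {(p : ℤ_[p]) ^ n} := by
  rw [← PadicInt.ker_toZModPow, RingHom.mem_ker, map_sub, sub_eq_zero]

lemma toZModPow_eq_iff_norm {n : ℕ} {x y : ℤ_[p]} :
    toZModPow n x = toZModPow n y ↔ ‖x - y‖ ≤ (p : ℝ) ^ (-n : ℤ) := by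
  rw [toZModPow_eq_iff, ← PadicInt.norm_le_pow_iff_mem_span_pow]

lemma descend {g : ℤ_[p] → ℤ_[p]} (hg : ∀ x y : ℤ_[p], ‖g x - g y‖ ≤ ‖x - y‖) {n : ℕ}
    {x y : ℤ_[p]} (hxy : toZModPow n x = toZModPow n y) :
    toZModPow n (g x) = toZModPow n (g y) := by
  rw [toZModPow_eq_iff_norm] at hxy ⊢
  exact (hg x y).trans hxy

lemma toZModPow_val {n : ℕ} (a : ZMod (p ^ n)) :
    toZModPow n ((a.val : ℤ_[p])) = a := by
  haveI : NeZero (p ^ n) := ⟨pow_ne_zero n hp.out.ne_zero⟩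
  rw [map_natCast]
  exact ZMod.natCast_rightInverse a

noncomputable def F (c : ℤ_[p]) (h : ℤ_[p] → ℤ_[p]) : ℤ_[p] → ℤ_[p] :=
  fun x => c + x + (p : ℤ_[p]) * (h (x + 1) - h x)

variable (c : ℤ_[p]) (h : ℤ_[p] → ℤ_[p])

lemma F_isom (hh : Compatible h) (x y : ℤ_[p]) : ‖F c h x - F c h y‖ = ‖x - y‖ := by
  rcases eq_or_ne x y with rfl | hxy
  · simp
  have hd : F c h x - F c h y
      = (x - y) + (p : ℤ_[p]) * ((h (x + 1) - h (y + 1)) - (h x - h y)) := by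
    simp only [F]; ring
  have h1 : ‖h (x + 1) - h (y + 1)‖ ≤ ‖x - y‖ := by
    have := hh (x + 1) (y + 1)
    simpa using this
  have h2 : ‖h x - h y‖ ≤ ‖x - y‖ := hh x y
  have hsub : ‖(h (x + 1) - h (y + 1)) - (h x - h y)‖ ≤ ‖x - y‖ := by
    rw [sub_eq_add_neg]
    refine (PadicInt.nonarchimedean _ _).trans (max_le h1 ?_)
    rwa [norm_neg]
  have hxy0 : (0 : ℝ) < ‖x - y‖ := by
    rw [norm_pos_iff]
    exact sub_ne_zero_of_ne hxy
  have hlt : ‖(p : ℤ_[p]) * ((h (x + 1) - h (y + 1)) - (h x - h y))‖ < ‖x - y‖ := by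
    rw [norm_mul, PadicInt.norm_p]
    have hp1 : (1 : ℝ) < p := by exact_mod_cast hp.out.one_lt
    calc (p : ℝ)⁻¹ * ‖(h (x + 1) - h (y + 1)) - (h x - h y)‖
        ≤ (p : ℝ)⁻¹ * ‖x - y‖ := by
          apply mul_le_mul_of_nonneg_left hsub
          positivity
      _ < 1 * ‖x - y‖ := by
          apply mul_lt_mul_of_pos_right _ hxy0
          rw [inv_lt_one_iff₀]; right; exact hp1
      _ = ‖x - y‖ := one_mul _
  rw [hd, PadicInt.norm_add_eq_max_of_ne hlt.ne', max_eq_left hlt.le]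

lemma F_iter_isom (hh : Compatible h) (m : ℕ) (x y : ℤ_[p]) :
    ‖(F c h)^[m] x - (F c h)^[m] y‖ = ‖x - y‖ := by
  induction m with
  | zero => simp
  | succ m ih => rw [iterate_succ_apply', iterate_succ_apply', F_isom c h hh, ih]

lemma F_iter_eq (m : ℕ) (x : ℤ_[p]) :
    (F c h)^[m] x = x + (m : ℤ_[p]) * c
      + (p : ℤ_[p]) * ∑ i ∈ Finset.range m, (h ((F c h)^[i] x + 1) - h ((F c h)^[i] x)) := by
  induction m with
  | zero => simp
  | succ m ih =>
    have hF : ∀ y : ℤ_[p], F c h y = c + y + (p : ℤ_[p]) * (h (y + 1) - h y) := fun _ => rfl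
    rw [iterate_succ_apply', hF, Finset.sum_range_succ, ih]
    push_cast
    ring


lemma F_telescope (hh : Compatible h) (n : ℕ) (x : ℤ_[p])
    (hT : ∀ a : ZMod (p ^ n), ∃ i : Fin (p ^ n), toZModPow n ((F c h)^[(i : ℕ)] x) = a) :
    toZModPow n (∑ i ∈ Finset.range (p ^ n),
      (h ((F c h)^[i] x + 1) - h ((F c h)^[i] x))) = 0 := by
  haveI : NeZero (p ^ n) := ⟨pow_ne_zero n hp.out.ne_zero⟩
  set ψ : ZMod (p ^ n) → ZMod (p ^ n) := fun a => toZModPow n (h ((a.val : ℤ_[p]))) with hψdef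
  have hψ : ∀ y : ℤ_[p], toZModPow n (h y) = ψ (toZModPow n y) := by
    intro y
    exact (descend hh (toZModPow_val (toZModPow n y))).symm
  rw [map_sum]
  have hterm : ∀ i : ℕ, toZModPow n (h ((F c h)^[i] x + 1) - h ((F c h)^[i] x))
      = ψ (toZModPow n ((F c h)^[i] x) + 1) - ψ (toZModPow n ((F c h)^[i] x)) := by
    intro i
    rw [map_sub, hψ, hψ, map_add, map_one]
  rw [Finset.sum_congr rfl (fun i _ => hterm i), Finset.sum_sub_distrib]
  set σ : Fin (p ^ n) → ZMod (p ^ n) := fun i => toZModPow n ((F c h)^[(i : ℕ)] x) with hσ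
  have hbij : Function.Bijective σ := by
    rw [Fintype.bijective_iff_surjective_and_card]
    exact ⟨fun a => hT a, by simp [ZMod.card]⟩
  have e0 : (∑ i ∈ Finset.range (p ^ n), ψ (toZModPow n ((F c h)^[i] x) + 1))
      = ∑ i : Fin (p ^ n), ψ (σ i + 1) := Finset.sum_range _
  have e0' : (∑ i ∈ Finset.range (p ^ n), ψ (toZModPow n ((F c h)^[i] x)))
      = ∑ i : Fin (p ^ n), ψ (σ i) := Finset.sum_range _
  have e1 : ∑ i : Fin (p ^ n), ψ (σ i + 1) = ∑ a : ZMod (p ^ n), ψ (a + 1) :=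
    Fintype.sum_bijective σ hbij _ _ (fun i => rfl)
  have e2 : ∑ i : Fin (p ^ n), ψ (σ i) = ∑ a : ZMod (p ^ n), ψ a :=
    Fintype.sum_bijective σ hbij _ _ (fun i => rfl)
  have e3 : ∑ a : ZMod (p ^ n), ψ (a + 1) = ∑ a : ZMod (p ^ n), ψ a :=
    Fintype.sum_bijective _ (Equiv.addRight (1 : ZMod (p ^ n))).bijective _ _ (fun a => rfl)
  rw [e0, e0', e1, e2, e3, sub_self]

lemma F_stepA (hh : Compatible h) (n : ℕ) (x : ℤ_[p])
    (hT : ∀ a : ZMod (p ^ n), ∃ i : Fin (p ^ n), toZModPow n ((F c h)^[(i : ℕ)] x) = a) :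
    (F c h)^[p ^ n] x - (x + (p : ℤ_[p]) ^ n * c) ∈ Ideal.span {(p : ℤ_[p]) ^ (n + 1)} := by
  have hS := F_telescope c h hh n x hT
  set S := ∑ i ∈ Finset.range (p ^ n), (h ((F c h)^[i] x + 1) - h ((F c h)^[i] x)) with hSdef
  have hmem : S ∈ Ideal.span {(p : ℤ_[p]) ^ n} := by
    rw [← PadicInt.ker_toZModPow]
    exact hS
  obtain ⟨t, ht⟩ := Ideal.mem_span_singleton.mp hmem
  rw [F_iter_eq, Ideal.mem_span_singleton]
  refine ⟨t, ?_⟩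
  push_cast
  rw [← hSdef, ht]
  ring


lemma F_trans (hh : Compatible h) (hc : ¬ (p : ℤ_[p]) ∣ c) (n : ℕ) :
    ∀ x y : ℤ_[p], ∃ i : ℕ, i < p ^ n ∧ (F c h)^[i] x - y ∈ Ideal.span {(p : ℤ_[p]) ^ n} := by
  induction n with
  | zero =>
    intro x y
    exact ⟨0, by norm_num, by rw [pow_zero, Ideal.span_singleton_one]; exact Submodule.mem_top⟩
  | succ n ih =>
    intro x y
    haveI : NeZero p := ⟨hp.out.ne_zero⟩
    have hT : ∀ z : ℤ_[p], ∀ a : ZMod (p ^ n),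
        ∃ i : Fin (p ^ n), toZModPow n ((F c h)^[(i : ℕ)] z) = a := by
      intro z a
      obtain ⟨i, hi, hmem⟩ := ih z ((a.val : ℤ_[p]))
      refine ⟨⟨i, hi⟩, ?_⟩
      have h2 := toZModPow_eq_iff.mpr hmem
      rwa [toZModPow_val] at h2
    obtain ⟨i, hi, hmem⟩ := ih x y
    set z := (F c h)^[i] x with hz
    obtain ⟨u, hu⟩ := Ideal.mem_span_singleton.mp hmem
    have hj : ∀ j : ℕ, (F c h)^[j * p ^ n] z - (z + (j : ℤ_[p]) * ((p : ℤ_[p]) ^ n * c))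
        ∈ Ideal.span {(p : ℤ_[p]) ^ (n + 1)} := by
      intro j
      induction j with
      | zero => simp
      | succ j ihj =>
        have hstep := F_stepA c h hh n ((F c h)^[j * p ^ n] z) (hT _)
        have hsum := Ideal.add_mem _ hstep ihj
        have heq : (F c h)^[(j + 1) * p ^ n] z - (z + ((j : ℕ) + 1 : ℤ_[p]) * ((p : ℤ_[p]) ^ n * c))
            = ((F c h)^[p ^ n] ((F c h)^[j * p ^ n] z)
                - ((F c h)^[j * p ^ n] z + (p : ℤ_[p]) ^ n * c))
              + ((F c h)^[j * p ^ n] z - (z + (j : ℤ_[p]) * ((p : ℤ_[p]) ^ n * c))) := by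
          have hiter : (j + 1) * p ^ n = p ^ n + j * p ^ n := by ring
          rw [hiter, Function.iterate_add_apply]
          ring
        have hcast : ((j + 1 : ℕ) : ℤ_[p]) = ((j : ℕ) + 1 : ℤ_[p]) := by push_cast; ring
        rw [hcast, heq]
        exact hsum
    have hcbar : PadicInt.toZMod c ≠ 0 := by
      intro h0
      apply hc
      rw [← Ideal.mem_span_singleton, ← PadicInt.maximalIdeal_eq_span_p, ← PadicInt.ker_toZMod]
      exact h0
    set jz : ZMod p := (- PadicInt.toZMod u) / PadicInt.toZMod c with hjz
    set j : ℕ := jz.val with hjdef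
    have hjp : j < p := ZMod.val_lt jz
    have hdvd : (p : ℤ_[p]) ∣ (u + (j : ℤ_[p]) * c) := by
      rw [← Ideal.mem_span_singleton, ← PadicInt.maximalIdeal_eq_span_p, ← PadicInt.ker_toZMod,
        RingHom.mem_ker, map_add, map_mul, map_natCast]
      have hjcast : ((j : ℕ) : ZMod p) = jz := ZMod.natCast_rightInverse jz
      rw [hjcast, hjz, div_mul_cancel₀ _ hcbar]
      ring
    obtain ⟨v, hv⟩ := hdvd
    refine ⟨j * p ^ n + i, ?_, ?_⟩
    · calc j * p ^ n + i < j * p ^ n + p ^ n := by omega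
        _ = (j + 1) * p ^ n := by ring
        _ ≤ p * p ^ n := Nat.mul_le_mul_right _ (by omega)
        _ = p ^ (n + 1) := by ring
    · rw [Function.iterate_add_apply, ← hz]
      have heq : (F c h)^[j * p ^ n] z - y
          = ((F c h)^[j * p ^ n] z - (z + (j : ℤ_[p]) * ((p : ℤ_[p]) ^ n * c)))
            + (p : ℤ_[p]) ^ (n + 1) * v := by
        have hv' : (p : ℤ_[p]) ^ (n + 1) * v = (p : ℤ_[p]) ^ n * (u + (j : ℤ_[p]) * c) := by
          rw [hv]; ring
        rw [hv']
        linear_combination hu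
      rw [heq]
      exact Ideal.add_mem _ (hj j) (Ideal.mem_span_singleton.mpr ⟨v, rfl⟩)


def coset (n : ℕ) (a : ZMod (p ^ n)) : Set ℤ_[p] := toZModPow n ⁻¹' {a}

lemma mem_coset {n : ℕ} {a : ZMod (p ^ n)} {x : ℤ_[p]} :
    x ∈ coset n a ↔ toZModPow n x = a := Iff.rfl

lemma coset_eq_closedBall (n : ℕ) (a : ZMod (p ^ n)) :
    coset n a = Metric.closedBall ((a.val : ℤ_[p])) ((p : ℝ) ^ (-n : ℤ)) := by
  ext x
  rw [mem_coset, Metric.mem_closedBall, dist_eq_norm]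
  constructor
  · intro hx
    refine toZModPow_eq_iff_norm.mp ?_
    rw [toZModPow_val, hx]
  · intro hx
    have := toZModPow_eq_iff_norm.mpr hx
    rwa [toZModPow_val] at this

lemma measurableSet_coset (n : ℕ) (a : ZMod (p ^ n)) : MeasurableSet (coset n a) := by
  rw [coset_eq_closedBall]
  exact Metric.isClosed_closedBall.measurableSet

lemma iUnion_coset (n : ℕ) : ⋃ a : ZMod (p ^ n), coset (p := p) n a = Set.univ :=
  Set.eq_univ_of_forall fun x => Set.mem_iUnion.mpr ⟨toZModPow n x, rfl⟩

lemma μp_univ : μp p Set.univ = 1 := by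
  have h1 := MeasureTheory.Measure.addHaarMeasure_self
    (K₀ := (⊤ : TopologicalSpace.PositiveCompacts ℤ_[p]))
  rwa [TopologicalSpace.PositiveCompacts.coe_top] at h1

lemma measure_coset_eq_zero_class (n : ℕ) (a : ZMod (p ^ n)) :
    μp p (coset n a) = μp p (coset n (0 : ZMod (p ^ n))) := by
  haveI : (μp p).IsAddLeftInvariant := by unfold μp; infer_instance
  have hset : coset n a = (fun x => (-(a.val : ℤ_[p])) + x) ⁻¹' (coset n (0 : ZMod (p ^ n))) := by
    ext x
    simp only [Set.mem_preimage, mem_coset, map_add, map_neg, toZModPow_val]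
    constructor
    · rintro rfl; ring
    · intro h0; exact (neg_add_eq_zero.mp h0).symm
  rw [hset, measure_preimage_add]

lemma sum_measure_coset (n : ℕ) (s : Set ℤ_[p]) (hs : MeasurableSet s) :
    ∑ a : ZMod (p ^ n), μp p (s ∩ coset n a) = μp p s := by
  haveI : NeZero (p ^ n) := ⟨pow_ne_zero n hp.out.ne_zero⟩
  have hcover : ⋃ a : ZMod (p ^ n), s ∩ coset n a = s := by
    rw [← Set.inter_iUnion, iUnion_coset, Set.inter_univ]
  have hdisj : Pairwise (Function.onFun Disjoint fun a : ZMod (p ^ n) => s ∩ coset n a) := by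
    intro a b hab
    refine Set.disjoint_left.mpr ?_
    rintro x ⟨-, hxa⟩ ⟨-, hxb⟩
    exact hab (hxa.symm.trans hxb)
  conv_rhs => rw [← hcover]
  rw [measure_iUnion hdisj (fun a => hs.inter (measurableSet_coset n a))]
  exact (tsum_fintype _).symm

lemma measure_coset (n : ℕ) (a : ZMod (p ^ n)) :
    μp p (coset n a) = ((p : ℝ≥0∞) ^ n)⁻¹ := by
  haveI : NeZero (p ^ n) := ⟨pow_ne_zero n hp.out.ne_zero⟩
  have hsum := sum_measure_coset (p := p) n Set.univ MeasurableSet.univ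
  simp only [Set.univ_inter, μp_univ] at hsum
  rw [Finset.sum_congr rfl (fun b _ => measure_coset_eq_zero_class n b)] at hsum
  rw [Finset.sum_const, Finset.card_univ, ZMod.card, nsmul_eq_mul] at hsum
  have hcast : ((p ^ n : ℕ) : ℝ≥0∞) = (p : ℝ≥0∞) ^ n := by push_cast; ring
  rw [hcast] at hsum
  have hp0 : ((p : ℝ≥0∞) ^ n) ≠ 0 := pow_ne_zero _ (by exact_mod_cast hp.out.ne_zero)
  have hpt : ((p : ℝ≥0∞) ^ n) ≠ ⊤ := ENNReal.pow_ne_top (ENNReal.natCast_ne_top p)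
  rw [measure_coset_eq_zero_class n a]
  calc μp p (coset n (0 : ZMod (p ^ n)))
      = ((p : ℝ≥0∞) ^ n)⁻¹ * ((p : ℝ≥0∞) ^ n * μp p (coset n (0 : ZMod (p ^ n)))) := by
        rw [← mul_assoc, ENNReal.inv_mul_cancel hp0 hpt, one_mul]
    _ = ((p : ℝ≥0∞) ^ n)⁻¹ := by rw [hsum, mul_one]

def PiC (p : ℕ) [Fact p.Prime] : Set (Set ℤ_[p]) := {S | ∃ n a, S = coset n a}

lemma isPiSystem_PiC : IsPiSystem (PiC p) := by
  have key : ∀ (n m : ℕ) (a : ZMod (p ^ n)) (b : ZMod (p ^ m)), n ≤ m →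
      (coset (p := p) n a ∩ coset m b).Nonempty → coset (p := p) m b ⊆ coset n a := by
    intro n m a b hnm ⟨x, hxa, hxb⟩ y hy
    rw [mem_coset] at *
    have h2 : y - x ∈ Ideal.span {(p : ℤ_[p]) ^ m} := toZModPow_eq_iff.mp (hy.trans hxb.symm)
    have h3 : y - x ∈ Ideal.span {(p : ℤ_[p]) ^ n} :=
      Ideal.span_singleton_le_span_singleton.mpr (pow_dvd_pow _ hnm) h2
    rw [← hxa]
    exact toZModPow_eq_iff.mpr h3
  rintro S ⟨n, a, rfl⟩ T ⟨m, b, rfl⟩ hne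
  rcases le_total n m with hnm | hmn
  · rw [Set.inter_eq_self_of_subset_right (key n m a b hnm hne)]
    exact ⟨m, b, rfl⟩
  · rw [Set.inter_comm] at hne
    rw [Set.inter_eq_self_of_subset_left (key m n b a hmn hne)]
    exact ⟨n, a, rfl⟩

lemma countable_PiC : (PiC p).Countable := by
  have hsub : PiC p ⊆ ⋃ n : ℕ, Set.range (fun a : ZMod (p ^ n) => coset n a) := by
    rintro S ⟨n, a, rfl⟩
    exact Set.mem_iUnion.mpr ⟨n, ⟨a, rfl⟩⟩
  refine Set.Countable.mono hsub (Set.countable_iUnion fun n => ?_)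
  haveI : NeZero (p ^ n) := ⟨pow_ne_zero n hp.out.ne_zero⟩
  exact Set.countable_range _


lemma borel_eq_generateFrom_PiC :
    (inferInstance : MeasurableSpace ℤ_[p]) = MeasurableSpace.generateFrom (PiC p) := by
  refine le_antisymm ?_ (MeasurableSpace.generateFrom_le ?_)
  · rw [BorelSpace.measurable_eq (α := ℤ_[p]), borel]
    refine MeasurableSpace.generateFrom_le ?_
    intro U hU
    simp only [Set.mem_setOf_eq] at hU
    have hU' : U = ⋃₀ {B | B ∈ PiC p ∧ B ⊆ U} := by
      apply Set.Subset.antisymm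
      · intro x hx
        obtain ⟨ε, hε, hball⟩ := Metric.isOpen_iff.mp hU x hx
        have hplt : (p : ℝ)⁻¹ < 1 := by
          rw [inv_lt_one_iff₀]
          right
          exact_mod_cast hp.out.one_lt
        obtain ⟨n, hn⟩ := exists_pow_lt_of_lt_one hε hplt
        have hn' : (p : ℝ) ^ (-n : ℤ) < ε := by
          rwa [zpow_neg, zpow_natCast, ← inv_pow]
        refine ⟨coset n (toZModPow n x), ⟨⟨n, _, rfl⟩, ?_⟩, rfl⟩
        intro y hy
        apply hball
        rw [Metric.mem_ball, dist_eq_norm]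
        calc ‖y - x‖ ≤ (p : ℝ) ^ (-n : ℤ) := toZModPow_eq_iff_norm.mp hy
          _ < ε := hn'
      · rintro x ⟨B, ⟨-, hBU⟩, hxB⟩
        exact hBU hxB
    rw [hU']
    refine MeasurableSet.sUnion (Set.Countable.mono (fun B hB => hB.1) countable_PiC) ?_
    rintro B ⟨hB, -⟩
    exact MeasurableSpace.measurableSet_generateFrom hB
  · rintro S ⟨n, a, rfl⟩
    exact measurableSet_coset n a

lemma F_continuous (hh : Compatible h) : Continuous (F c h) :=
  (Isometry.of_dist_eq fun x y => by
    rw [dist_eq_norm, dist_eq_norm, F_isom c h hh]).continuous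

lemma F_preimage_coset (hh : Compatible h) (n : ℕ) (a : ZMod (p ^ n)) :
    ∃ b : ZMod (p ^ n), F c h ⁻¹' (coset n a) = coset n b := by
  haveI : NeZero (p ^ n) := ⟨pow_ne_zero n hp.out.ne_zero⟩
  set Fb : ZMod (p ^ n) → ZMod (p ^ n) :=
    fun b => toZModPow n (F c h ((b.val : ℤ_[p]))) with hFb
  have hinj : Function.Injective Fb := by
    intro b b' hb
    have h1 : toZModPow n ((b.val : ℤ_[p])) = toZModPow n ((b'.val : ℤ_[p])) := by
      rw [toZModPow_eq_iff_norm] at hb ⊢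
      rwa [F_isom c h hh] at hb
    rwa [toZModPow_val, toZModPow_val] at h1
  obtain ⟨b, hb⟩ := (Finite.injective_iff_surjective.mp hinj) a
  refine ⟨b, ?_⟩
  ext z
  simp only [Set.mem_preimage, mem_coset]
  constructor
  · intro hz
    have h1 : toZModPow n (F c h z) = toZModPow n (F c h ((b.val : ℤ_[p]))) :=
      hz.trans hb.symm
    rw [toZModPow_eq_iff_norm, F_isom c h hh] at h1
    have h2 := toZModPow_eq_iff_norm.mpr h1
    rwa [toZModPow_val] at h2
  · intro hz
    have h2 : toZModPow n (F c h z) = toZModPow n (F c h ((b.val : ℤ_[p]))) :=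
      descend (fun x y => (F_isom c h hh x y).le) (by rw [hz, toZModPow_val])
    rw [h2]
    exact hb

lemma F_measurePreserving (hh : Compatible h) :
    MeasurePreserving (F c h) (μp p) (μp p) := by
  haveI : IsProbabilityMeasure (μp p) := ⟨μp_univ⟩
  have hmeas : Measurable (F c h) := (F_continuous c h hh).measurable
  refine ⟨hmeas, ?_⟩
  haveI : IsFiniteMeasure ((μp p).map (F c h)) := by
    constructor
    rw [Measure.map_apply hmeas MeasurableSet.univ, Set.preimage_univ, μp_univ]
    exact ENNReal.one_lt_top
  refine MeasureTheory.ext_of_generate_finite (PiC p) borel_eq_generateFrom_PiC isPiSystem_PiC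
    ?_ ?_
  · rintro S ⟨n, a, rfl⟩
    rw [Measure.map_apply hmeas (measurableSet_coset n a)]
    obtain ⟨b, hb⟩ := F_preimage_coset c h hh n a
    rw [hb, measure_coset, measure_coset]
  · rw [Measure.map_apply hmeas MeasurableSet.univ, Set.preimage_univ]


lemma F_ergodic (hh : Compatible h) (hc : ¬ (p : ℤ_[p]) ∣ c) :
    Ergodic (F c h) (μp p) := by
  haveI : IsProbabilityMeasure (μp p) := ⟨μp_univ⟩
  have hMP : MeasurePreserving (F c h) (μp p) (μp p) := F_measurePreserving c h hh
  refine ⟨hMP, ⟨?_⟩⟩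
  intro s hs hfs
  rw [Filter.eventuallyConst_set']
  have hiter_pre : ∀ m : ℕ, (F c h)^[m] ⁻¹' s = s := by
    intro m
    induction m with
    | zero => simp
    | succ m ih => rw [Function.iterate_succ', Set.preimage_comp, hfs, ih]
  have hconst : ∀ (n : ℕ) (a b : ZMod (p ^ n)),
      μp p (s ∩ coset n a) = μp p (s ∩ coset n b) := by
    intro n a b
    haveI : NeZero (p ^ n) := ⟨pow_ne_zero n hp.out.ne_zero⟩
    obtain ⟨m, -, hmem⟩ := F_trans c h hh hc n ((a.val : ℤ_[p])) ((b.val : ℤ_[p]))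
    have hmp : MeasurePreserving ((F c h)^[m]) (μp p) (μp p) := hMP.iterate m
    have hFab : toZModPow n ((F c h)^[m] ((a.val : ℤ_[p]))) = b := by
      have h2 := toZModPow_eq_iff.mpr hmem
      rwa [toZModPow_val] at h2
    have hpre : (F c h)^[m] ⁻¹' (coset n b) = coset n a := by
      ext z
      simp only [Set.mem_preimage, mem_coset]
      constructor
      · intro hz
        have h1 : toZModPow n ((F c h)^[m] z)
            = toZModPow n ((F c h)^[m] ((a.val : ℤ_[p]))) := hz.trans hFab.symm
        rw [toZModPow_eq_iff_norm, F_iter_isom c h hh m] at h1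
        have h2 := toZModPow_eq_iff_norm.mpr h1
        rwa [toZModPow_val] at h2
      · intro hz
        have h2 : toZModPow n ((F c h)^[m] z)
            = toZModPow n ((F c h)^[m] ((a.val : ℤ_[p]))) :=
          descend (fun x y => (F_iter_isom c h hh m x y).le) (by rw [hz, toZModPow_val])
        rw [h2]
        exact hFab
    calc μp p (s ∩ coset n a)
        = μp p ((F c h)^[m] ⁻¹' s ∩ (F c h)^[m] ⁻¹' (coset n b)) := by
          rw [hiter_pre, hpre]
      _ = μp p ((F c h)^[m] ⁻¹' (s ∩ coset n b)) := by rw [Set.preimage_inter]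
      _ = μp p (s ∩ coset n b) :=
          hmp.measure_preimage (hs.inter (measurableSet_coset n b)).nullMeasurableSet
  have hkey : ∀ (n : ℕ) (a : ZMod (p ^ n)),
      μp p (s ∩ coset n a) = μp p s * ((p : ℝ≥0∞) ^ n)⁻¹ := by
    intro n a
    haveI : NeZero (p ^ n) := ⟨pow_ne_zero n hp.out.ne_zero⟩
    have hsum := sum_measure_coset n s hs
    rw [Finset.sum_congr rfl (fun b _ => hconst n b a)] at hsum
    rw [Finset.sum_const, Finset.card_univ, ZMod.card, nsmul_eq_mul] at hsum
    have hcast : ((p ^ n : ℕ) : ℝ≥0∞) = (p : ℝ≥0∞) ^ n := by push_cast; ring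
    rw [hcast] at hsum
    have hp0 : ((p : ℝ≥0∞) ^ n) ≠ 0 := pow_ne_zero _ (by exact_mod_cast hp.out.ne_zero)
    have hpt : ((p : ℝ≥0∞) ^ n) ≠ ⊤ := ENNReal.pow_ne_top (ENNReal.natCast_ne_top p)
    calc μp p (s ∩ coset n a)
        = ((p : ℝ≥0∞) ^ n)⁻¹ * ((p : ℝ≥0∞) ^ n * μp p (s ∩ coset n a)) := by
          rw [← mul_assoc, ENNReal.inv_mul_cancel hp0 hpt, one_mul]
      _ = μp p s * ((p : ℝ≥0∞) ^ n)⁻¹ := by rw [hsum, mul_comm]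
  have hν : (μp p).restrict s = μp p s • μp p := by
    haveI : IsFiniteMeasure (μp p s • μp p) := by
      constructor
      rw [Measure.smul_apply, smul_eq_mul, μp_univ, mul_one]
      exact measure_lt_top _ _
    refine MeasureTheory.ext_of_generate_finite (PiC p) borel_eq_generateFrom_PiC isPiSystem_PiC
      ?_ ?_
    · rintro S ⟨n, a, rfl⟩
      rw [Measure.restrict_apply (measurableSet_coset n a), Set.inter_comm, hkey n a,
        Measure.smul_apply, smul_eq_mul, measure_coset]
    · rw [Measure.restrict_apply MeasurableSet.univ, Set.univ_inter,
        Measure.smul_apply, smul_eq_mul, μp_univ, mul_one]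
  have hquad : μp p s = μp p s * μp p s := by
    calc μp p s = (μp p).restrict s s := by rw [Measure.restrict_apply hs, Set.inter_self]
      _ = (μp p s • μp p) s := by rw [hν]
      _ = μp p s * μp p s := by rw [Measure.smul_apply, smul_eq_mul]
  rcases eq_or_ne (μp p s) 0 with h0 | h0
  · left
    exact ae_eq_empty.mpr h0
  · right
    have h1 : μp p s = 1 := by
      have hne : μp p s ≠ ⊤ := measure_ne_top _ _
      have h2 : 1 * μp p s = μp p s * μp p s := by rw [one_mul]; exact hquad
      exact ((ENNReal.mul_left_strictMono h0 hne).injective h2).symm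
    rw [ae_eq_univ]
    have h3 := measure_compl hs (measure_ne_top (μp p) s)
    rw [h1, μp_univ, tsub_self] at h3
    exact h3

end PadicErgAux

/-- For odd `p`, `c ∈ ℤ_[p]` with `c ≢ 0 (mod p)`, and compatible `h`, the function
`f(x) = c + x + p·(h(x+1) − h(x))` is ergodic w.r.t. `μp p`. -/
theorem ergodic_of_add_discrete_derivative
    (hp2 : p ≠ 2) (c : ℤ_[p]) (h : ℤ_[p] → ℤ_[p]) (hh : Compatible h)
    (hc : ¬ (p : ℤ_[p]) ∣ c) :
    Ergodic (fun x => c + x + (p : ℤ_[p]) * (h (x + 1) - h x)) (μp p) :=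
  PadicErgAux.F_ergodic c h hh hc
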